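/- Let n ≥ 2 be a natural number. There is no unitary map (complex-linear isometric equivalence) U : EuclideanSpace ℂ (Fin n × Fin n) ≃ₗᵢ[ℂ] EuclideanSpace ℂ (Fin n × Fin n) together with a unit vector φ ∈ EuclideanSpace ℂ (Fin n) such that U (ψ ⊗ φ) = ψ ⊗ ψ for every unit vector ψ ∈ EuclideanSpace ℂ (Fin n). (No-cloning theorem.) -/

import Mathlib

/-- The tensor product of two vectors in `EuclideanSpace ℂ (Fin n)`, given by
`(ψ ⊗ φ)(i, j) = ψ i * φ j`. -/
noncomputable def tensorProd {n : ℕ} (ψ φ : EuclideanSpace ℂ (Fin n)) :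
    EuclideanSpace ℂ (Fin n × Fin n) :=
  WithLp.toLp 2 (fun p : Fin n × Fin n => ψ p.1 * φ p.2)

/-- **No-cloning theorem.** For `n ≥ 2`, there is no unitary map
`U : EuclideanSpace ℂ (Fin n × Fin n) ≃ₗᵢ[ℂ] EuclideanSpace ℂ (Fin n × Fin n)` together with a
unit vector `φ` such that `U (ψ ⊗ φ) = ψ ⊗ ψ` for every unit vector `ψ`. -/
theorem no_cloning (n : ℕ) (hn : 2 ≤ n) :
    ¬ ∃ (U : EuclideanSpace ℂ (Fin n × Fin n) ≃ₗᵢ[ℂ] EuclideanSpace ℂ (Fin n × Fin n))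
        (φ : EuclideanSpace ℂ (Fin n)), ‖φ‖ = 1 ∧
        ∀ ψ : EuclideanSpace ℂ (Fin n), ‖ψ‖ = 1 → U (tensorProd ψ φ) = tensorProd ψ ψ := by
  rintro ⟨U, φ, hφ, h⟩
  have h0 : (0 : ℕ) < n := by omega
  have h1 : (1 : ℕ) < n := by omega
  set i0 : Fin n := ⟨0, h0⟩
  set i1 : Fin n := ⟨1, h1⟩
  have hne : i0 ≠ i1 := by simp [i0, i1, Fin.ext_iff]
  set e0 : EuclideanSpace ℂ (Fin n) := EuclideanSpace.single i0 1
  set e1 : EuclideanSpace ℂ (Fin n) := EuclideanSpace.single i1 1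
  have he0 : ‖e0‖ = 1 := by simp [e0]
  have he1 : ‖e1‖ = 1 := by simp [e1]
  have horth : inner ℂ e0 e1 = (0 : ℂ) := by
    simp [e0, e1, EuclideanSpace.inner_single_left, EuclideanSpace.single_apply,
      Ne.symm hne]
  have hsum : ‖e0 + e1‖ = Real.sqrt 2 := by
    have hsq : ‖e0 + e1‖ ^ 2 = 2 := by
      rw [norm_add_sq (𝕜 := ℂ)]
      simp [he0, he1, horth]
      ring
    rw [show (2:ℝ) = ‖e0 + e1‖ ^ 2 from hsq.symm]
    rw [Real.sqrt_sq (norm_nonneg _)]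
  set c : ℂ := ((Real.sqrt 2 : ℝ) : ℂ)⁻¹
  set ψ : EuclideanSpace ℂ (Fin n) := c • (e0 + e1)
  have hs2 : (0:ℝ) < Real.sqrt 2 := Real.sqrt_pos.mpr (by norm_num)
  have hψ : ‖ψ‖ = 1 := by
    rw [show ψ = c • (e0 + e1) from rfl, norm_smul, hsum]
    simp only [c, norm_inv, Complex.norm_real, Real.norm_eq_abs,
      abs_of_pos hs2]
    field_simp
  have key : U (tensorProd ψ φ) = tensorProd ψ ψ := h ψ hψ
  have hexp : tensorProd ψ φ = c • (tensorProd e0 φ + tensorProd e1 φ) := by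
    ext p
    simp only [tensorProd, ψ, PiLp.smul_apply, PiLp.add_apply, smul_eq_mul, PiLp.toLp_apply]
    ring
  rw [hexp, map_smul, map_add, h e0 he0, h e1 he1] at key
  have keyv := congrArg (fun v => v (i0, i0)) key
  simp only [tensorProd, ψ, PiLp.smul_apply, PiLp.add_apply, smul_eq_mul, PiLp.toLp_apply,
    e0, e1, EuclideanSpace.single_apply, if_pos rfl, if_neg hne, if_true] at keyv
  -- keyv : c * (1*1 + 0*0) = (c*(1+0)) * (c*(1+0))
  have hc : c = c * c := by linear_combination keyv
  have hcne : c ≠ 0 := by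
    simp only [c]
    intro hzero
    rw [inv_eq_zero] at hzero
    exact_mod_cast hs2.ne' (by exact_mod_cast hzero)
  have hc1 : (1:ℂ) = c := mul_left_cancel₀ hcne (by rw [mul_one]; exact hc)
  have hr : (1:ℝ) = (Real.sqrt 2)⁻¹ := by
    have h' : ((1:ℝ):ℂ) = (((Real.sqrt 2)⁻¹ : ℝ) : ℂ) := by
      push_cast
      simp only [c] at hc1
      exact hc1
    exact_mod_cast h'
  have h2 : Real.sqrt 2 = 1 := by
    have := hr.symm
    rwa [inv_eq_one] at this
  have := Real.sq_sqrt (by norm_num : (2:ℝ) ≥ 0)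
  rw [h2] at this
  norm_num at this
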